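/- (Lemma 2: existence of the steady-state ratio ρ*.) Let c > 0 and H₁, H₂ ≥ 0 with H₁ + H₂ > 0. Define ρ₃ = 1/(1 + H₁²·c) and ρ₄ = 1/(1 + (H₁ + H₂·√ρ₃)²·c). Then there exists ρ* with ρ₄ ≤ ρ* < 1 satisfying ρ* · (1 + (H₁ + H₂·√ρ*)²·c) = 1, i.e. ρ* = 1/(1 + (H₁ + H₂·√ρ*)²·c). -/
import Mathlib


/-- Lemma 2: existence of the steady-state ratio `ρ*`.  For `c > 0` and
`H₁, H₂ ≥ 0` with `H₁ + H₂ > 0`, setting `ρ₃ = 1/(1 + H₁²·c)` and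
`ρ₄ = 1/(1 + (H₁ + H₂·√ρ₃)²·c)`, there exists `ρ*` with `ρ₄ ≤ ρ* < 1` such that
`ρ* · (1 + (H₁ + H₂·√ρ*)²·c) = 1`. -/
theorem exists_steady_state_ratio (c H₁ H₂ : ℝ) (hc : 0 < c)
    (hH₁ : 0 ≤ H₁) (hH₂ : 0 ≤ H₂) (hsum : 0 < H₁ + H₂)
    (ρ₃ ρ₄ : ℝ) (hρ₃ : ρ₃ = 1 / (1 + H₁ ^ 2 * c))
    (hρ₄ : ρ₄ = 1 / (1 + (H₁ + H₂ * Real.sqrt ρ₃) ^ 2 * c)) :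
    ∃ ρ : ℝ, ρ₄ ≤ ρ ∧ ρ < 1 ∧
      ρ * (1 + (H₁ + H₂ * Real.sqrt ρ) ^ 2 * c) = 1 := by
  set A : ℝ := H₁ + H₂ * Real.sqrt ρ₃ with hA
  have hden₃ : 0 < 1 + H₁ ^ 2 * c := by positivity
  have hρ₃pos : 0 < ρ₃ := by rw [hρ₃]; positivity
  have hsq₃ : 0 ≤ Real.sqrt ρ₃ := Real.sqrt_nonneg _
  have hAnn : 0 ≤ A := by positivity
  have hAge : H₁ ≤ A := by simp [hA]; positivity
  have hdenA : 0 < 1 + A ^ 2 * c := by positivity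
  have hρ₄pos : 0 < ρ₄ := by rw [hρ₄]; positivity
  have hρ₄eq : ρ₄ * (1 + A ^ 2 * c) = 1 := by
    rw [hρ₄]; field_simp
  have hρ₄le₃ : ρ₄ ≤ ρ₃ := by
    rw [hρ₃, hρ₄]
    apply one_div_le_one_div_of_le hden₃
    have : H₁ ^ 2 ≤ A ^ 2 := by nlinarith
    nlinarith
  have hρ₄le1 : ρ₄ ≤ 1 := by
    rw [hρ₄]
    rw [div_le_one hdenA]
    nlinarith
  set g : ℝ → ℝ := fun ρ => ρ * (1 + (H₁ + H₂ * Real.sqrt ρ) ^ 2 * c) with hg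
  have hcont : ContinuousOn g (Set.Icc ρ₄ 1) := by
    apply Continuous.continuousOn
    continuity
  have hgρ₄ : g ρ₄ ≤ 1 := by
    have hs : Real.sqrt ρ₄ ≤ Real.sqrt ρ₃ := Real.sqrt_le_sqrt hρ₄le₃
    have hB : 0 ≤ H₁ + H₂ * Real.sqrt ρ₄ := by positivity
    have hBA : H₁ + H₂ * Real.sqrt ρ₄ ≤ A := by
      simp [hA]; nlinarith
    have : (H₁ + H₂ * Real.sqrt ρ₄) ^ 2 ≤ A ^ 2 := by nlinarith
    calc g ρ₄ = ρ₄ * (1 + (H₁ + H₂ * Real.sqrt ρ₄) ^ 2 * c) := rfl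
      _ ≤ ρ₄ * (1 + A ^ 2 * c) := by gcongr
      _ = 1 := hρ₄eq
  have hg1 : 1 < g 1 := by
    simp only [hg, Real.sqrt_one, mul_one, one_mul]
    nlinarith [mul_pos (pow_pos hsum 2) hc]
  have h1mem : (1 : ℝ) ∈ Set.Icc (g ρ₄) (g 1) := ⟨hgρ₄, le_of_lt hg1⟩
  obtain ⟨ρ, hρmem, hρeq⟩ := intermediate_value_Icc hρ₄le1 hcont h1mem
  refine ⟨ρ, hρmem.1, ?_, hρeq⟩
  rcases lt_or_eq_of_le hρmem.2 with h | h
  · exact h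
  · exfalso; rw [h] at hρeq; exact absurd hρeq (ne_of_gt hg1)
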